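/- arXiv:2410.11130 — 2 statements merged into one kernel-verified Lean document; each statement's English description precedes it below -/
import Mathlib

section
/- Let g : Z × X → Y satisfy ‖g(z₁,x₁) − g(z₂,x₂)‖ ≤ K_θ(‖z₁−z₂‖ + ‖x₁−x₂‖) for some K_θ > 0, and let μ : X × Y → ℝ^d and σ : X × Y → ℝ^d (σ componentwise nonnegative) satisfy ‖μ(x₁,y₁) − μ(x₂,y₂)‖² + ‖σ(x₁,y₁) − σ(x₂,y₂)‖² ≤ K_φ²(‖x₁−x₂‖ + ‖y₁−y₂‖)² for some K_φ > 0, and write q(x,y) := N(μ(x,y), diag σ(x,y)²). Then for all x₁, x₂ ∈ X and y₁, y₂ ∈ Y, and for every function f : Z × X → ℝ that is integrable against the relevant measures and satisfies |f(z,x) − f(z',x')| ≤ K_θ(‖z−z'‖ + ‖x−x'‖) for all z,z',x,x', one has | E_{z∼q(x₁,y₁)} f(z,x₁) − E_{z∼q(x₂,y₂)} f(z,x₂) | ≤ K_φ K_θ (‖x₁−x₂‖ + ‖y₁−y₂‖) + K_θ ‖x₁−x₂‖. -/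
open MeasureTheory ProbabilityTheory

/-- The diagonal Gaussian measure `N(μ, diag σ²)` on `ℝ^d`: the product of the
one-dimensional Gaussians with mean `μ i` and variance `(σ i)²` (a Dirac mass
whenever `σ i = 0`). -/
noncomputable def gaussianPi {d : ℕ} (μ σ : EuclideanSpace ℝ (Fin d)) :
    Measure (EuclideanSpace ℝ (Fin d)) :=
  (Measure.pi fun i => gaussianReal (μ i) ⟨(σ i) ^ 2, sq_nonneg _⟩).map
    (MeasurableEquiv.toLp 2 (Fin d → ℝ))

section CVAEAuxSection
namespace CVAEAux
open Real Set
open scoped NNReal ENNReal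


lemma pdf01 (x : ℝ) : gaussianPDFReal 0 1 x = (√(2*π))⁻¹ * rexp (-(1/2) * x^2) := by
  simp only [gaussianPDFReal, NNReal.coe_one, mul_one, sub_zero]
  ring_nf

lemma integrable_pow_exp (n : ℕ) : Integrable (fun x : ℝ => x ^ n * rexp (-(1/2) * x^2)) := by
  have := integrable_rpow_mul_exp_neg_mul_sq (b := 1/2) (by norm_num) (s := (n:ℝ))
    ((by norm_num : (-1:ℝ) < 0).trans_le (Nat.cast_nonneg n))
  simpa [Real.rpow_natCast] using this

lemma integrable_exp_half : Integrable (fun x : ℝ => rexp (-(1/2) * x^2)) := by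
  simpa using integrable_pow_exp 0

lemma int_exp_half : ∫ x : ℝ, rexp (-(1/2) * x^2) = √(2*π) := by
  have := integral_gaussian (1/2)
  rw [show π / (1/2 : ℝ) = 2 * π by ring] at this
  simpa [neg_mul] using this

lemma int_sq_exp_half : ∫ x : ℝ, x^2 * rexp (-(1/2) * x^2) = √(2*π) := by
  have hderiv : ∀ x : ℝ, HasDerivAt (fun y : ℝ => -y * rexp (-(1/2) * y^2))
      (x^2 * rexp (-(1/2) * x^2) - rexp (-(1/2) * x^2)) x := by
    intro x
    have h1 : HasDerivAt (fun y : ℝ => -(1/2) * y^2) (-(1/2) * (2*x)) x := by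
      simpa using ((hasDerivAt_pow 2 x).const_mul (-(1/2:ℝ)))
    have h2 : HasDerivAt (fun y : ℝ => rexp (-(1/2) * y^2)) (rexp (-(1/2) * x^2) * (-(1/2) * (2*x))) x :=
      (Real.hasDerivAt_exp _).comp x h1
    have h3 : HasDerivAt (fun y : ℝ => -y * rexp (-(1/2) * y^2)) _ x := (hasDerivAt_neg x).mul h2
    convert h3 using 1
    ring
  have hf' : Integrable (fun x : ℝ => x^2 * rexp (-(1/2) * x^2) - rexp (-(1/2) * x^2)) :=
    (integrable_pow_exp 2).sub integrable_exp_half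
  have hf : Integrable (fun x : ℝ => -x * rexp (-(1/2) * x^2)) := by
    have := (integrable_pow_exp 1).neg
    refine this.congr (Filter.Eventually.of_forall fun x => ?_)
    simp only [Pi.neg_apply, pow_one]
    ring
  have h0 := integral_eq_zero_of_hasDerivAt_of_integrable hderiv hf' hf
  rw [integral_sub (integrable_pow_exp 2) integrable_exp_half, sub_eq_zero] at h0
  rw [h0, int_exp_half]

lemma sqrt_two_pi_pos : (0:ℝ) < √(2*π) := Real.sqrt_pos.mpr (by positivity)

lemma integral_N01 (g : ℝ → ℝ) :
    ∫ x, g x ∂gaussianReal 0 1 = ∫ x, gaussianPDFReal 0 1 x • g x := by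
  rw [gaussianReal_of_var_ne_zero 0 one_ne_zero, gaussianPDF_def]
  have h : (fun x => ENNReal.ofReal (gaussianPDFReal 0 1 x))
      = fun x => ((Real.toNNReal (gaussianPDFReal 0 1 x) : ℝ≥0) : ℝ≥0∞) := rfl
  rw [h, integral_withDensity_eq_integral_smul ((measurable_gaussianPDFReal 0 1).real_toNNReal) g]
  congr 1; ext x
  rw [NNReal.smul_def, Real.coe_toNNReal _ (gaussianPDFReal_nonneg _ _ _)]

lemma integrable_N01_iff (g : ℝ → ℝ) :
    Integrable g (gaussianReal 0 1) ↔ Integrable (fun x => gaussianPDFReal 0 1 x • g x) := by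
  rw [gaussianReal_of_var_ne_zero 0 one_ne_zero, gaussianPDF_def]
  have h : (fun x => ENNReal.ofReal (gaussianPDFReal 0 1 x))
      = fun x => ((Real.toNNReal (gaussianPDFReal 0 1 x) : ℝ≥0) : ℝ≥0∞) := rfl
  rw [h, integrable_withDensity_iff_integrable_smul ((measurable_gaussianPDFReal 0 1).real_toNNReal)]
  constructor <;> intro hh <;> refine hh.congr (Filter.Eventually.of_forall fun x => ?_) <;>
    simp only [NNReal.smul_def, Real.coe_toNNReal _ (gaussianPDFReal_nonneg _ _ _), smul_eq_mul]

lemma integrable_id_N01 : Integrable (fun x : ℝ => x) (gaussianReal 0 1) := by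
  rw [integrable_N01_iff]
  refine Integrable.congr (((integrable_pow_exp 1).const_mul ((√(2*π))⁻¹)))
    (Filter.Eventually.of_forall fun x => ?_)
  simp only [pdf01, smul_eq_mul, pow_one]; ring

lemma integrable_sq_N01 : Integrable (fun x : ℝ => x^2) (gaussianReal 0 1) := by
  rw [integrable_N01_iff]
  refine Integrable.congr (((integrable_pow_exp 2).const_mul ((√(2*π))⁻¹)))
    (Filter.Eventually.of_forall fun x => ?_)
  simp only [pdf01, smul_eq_mul]; ring

lemma int_id_N01 : ∫ x, x ∂gaussianReal 0 1 = 0 := by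
  rw [integral_N01]
  have h := integral_neg_eq_self (fun x => gaussianPDFReal 0 1 x • x) (volume : Measure ℝ)
  have hodd : (fun x : ℝ => gaussianPDFReal 0 1 (-x) • (-x))
      = fun x => -(gaussianPDFReal 0 1 x • x) := by
    funext x
    rw [pdf01, pdf01, smul_eq_mul, smul_eq_mul, neg_sq]
    ring
  rw [hodd, integral_neg] at h
  linarith [h]

lemma int_sq_N01 : ∫ x, x^2 ∂gaussianReal 0 1 = 1 := by
  rw [integral_N01]
  have h : (fun x : ℝ => gaussianPDFReal 0 1 x • x^2)
      = fun x => (√(2*π))⁻¹ * (x^2 * rexp (-(1/2) * x^2)) := by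
    funext x; rw [pdf01, smul_eq_mul]; ring
  rw [h, integral_const_mul, int_sq_exp_half, inv_mul_cancel₀ sqrt_two_pi_pos.ne']

lemma int_affine_sq_N01 (a b : ℝ) : ∫ x, (a + b * x)^2 ∂gaussianReal 0 1 = a^2 + b^2 := by
  have h1 : Integrable (fun x : ℝ => 2*a*b*x) (gaussianReal 0 1) := integrable_id_N01.const_mul _
  have h2 : Integrable (fun x : ℝ => b^2*x^2) (gaussianReal 0 1) := integrable_sq_N01.const_mul _
  have h12 : Integrable (fun x : ℝ => 2*a*b*x + b^2*x^2) (gaussianReal 0 1) := h1.add h2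
  have hexp : (fun x : ℝ => (a + b * x)^2)
      = fun x => a^2 + (2*a*b*x + b^2*x^2) := by funext x; ring
  rw [hexp, integral_add (integrable_const _) h12, integral_add h1 h2,
    integral_const_mul, integral_const_mul, int_id_N01, int_sq_N01, integral_const]
  simp

lemma integrable_affine_sq_N01 (a b : ℝ) :
    Integrable (fun x : ℝ => (a + b * x)^2) (gaussianReal 0 1) := by
  have h1 : Integrable (fun x : ℝ => 2*a*b*x) (gaussianReal 0 1) := integrable_id_N01.const_mul _
  have h2 : Integrable (fun x : ℝ => b^2*x^2) (gaussianReal 0 1) := integrable_sq_N01.const_mul _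
  have h12 : Integrable (fun x : ℝ => 2*a*b*x + b^2*x^2) (gaussianReal 0 1) := h1.add h2
  have h012 : Integrable (fun x : ℝ => a^2 + (2*a*b*x + b^2*x^2)) (gaussianReal 0 1) :=
    (integrable_const _).add h12
  exact h012.congr (Filter.Eventually.of_forall fun x => by ring)



lemma pi_map_comp {n : ℕ} (μ ν : Fin n → Measure ℝ)
    [∀ i, IsProbabilityMeasure (μ i)] [∀ i, IsProbabilityMeasure (ν i)]
    (F : Fin n → ℝ → ℝ) (hF : ∀ i, Measurable (F i))
    (h : ∀ i, (μ i).map (F i) = ν i) :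
    (Measure.pi μ).map (fun a i => F i (a i)) = Measure.pi ν := by
  refine (Measure.pi_eq fun s hs => ?_).symm
  have hFm : Measurable (fun a : Fin n → ℝ => fun i => F i (a i)) :=
    measurable_pi_lambda _ fun i => (hF i).comp (measurable_pi_apply i)
  rw [Measure.map_apply hFm (MeasurableSet.univ_pi hs)]
  have hpre : (fun a : Fin n → ℝ => fun i => F i (a i)) ⁻¹' Set.pi Set.univ s
      = Set.pi Set.univ fun i => F i ⁻¹' s i := by
    ext a; simp [Set.mem_pi]
  rw [hpre, Measure.pi_pi]
  refine Finset.prod_congr rfl fun i _ => ?_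
  rw [← h i, Measure.map_apply (hF i) (hs i)]

lemma pi_map_eval {n : ℕ} (μ : Fin n → Measure ℝ) [∀ i, IsProbabilityMeasure (μ i)] (i : Fin n) :
    (Measure.pi μ).map (fun a => a i) = μ i := by
  ext s hs
  rw [Measure.map_apply (measurable_pi_apply i) hs]
  have hpre : (fun a : Fin n → ℝ => a i) ⁻¹' s
      = Set.pi Set.univ (fun j => if j = i then s else Set.univ) := by
    ext a
    simp only [Set.mem_preimage, Set.mem_pi, Set.mem_univ, forall_true_left]
    constructor
    · intro ha j
      by_cases hj : j = i
      · subst hj; simp [ha]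
      · simp [hj]
    · intro ha
      have := ha i
      simpa using this
  rw [hpre, Measure.pi_pi]
  rw [Finset.prod_eq_single i (fun j _ hj => by simp [hj]) (by simp)]
  simp



lemma map_affine (a b : ℝ) :
    (gaussianReal 0 1).map (fun x => a + b * x) = gaussianReal a ⟨b^2, sq_nonneg b⟩ := by
  have hc : (fun x : ℝ => a + b * x) = (· + a) ∘ (b * ·) := funext fun x => by
    simp [Function.comp, add_comm]
  rw [hc, ← Measure.map_map (measurable_add_const a) (measurable_const_mul b),
    gaussianReal_map_const_mul b, gaussianReal_map_add_const a]
  congr 1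
  · ring
  · ext : 1
    simp
    rfl

lemma gaussianPi_eq_map {d : ℕ} (μ σ : EuclideanSpace ℝ (Fin d)) :
    gaussianPi μ σ = (Measure.pi (fun _ : Fin d => gaussianReal 0 1)).map
      (fun a : Fin d → ℝ =>
        (WithLp.toLp 2 (fun i => μ i + σ i * a i) : EuclideanSpace ℝ (Fin d))) := by
  rw [gaussianPi]
  haveI : ∀ i, IsProbabilityMeasure (gaussianReal (μ i) ⟨(σ i) ^ 2, sq_nonneg _⟩) :=
    fun i => instIsProbabilityMeasureGaussianReal _ _
  rw [← (pi_map_comp (fun _ => gaussianReal 0 1)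
    (fun i => gaussianReal (μ i) ⟨(σ i) ^ 2, sq_nonneg _⟩)
    (fun i x => μ i + σ i * x)
    (fun i => ((measurable_id.const_mul (σ i)).const_add (μ i)))
    (fun i => map_affine (μ i) (σ i))), Measure.map_map
    (MeasurableEquiv.toLp 2 (Fin d → ℝ)).measurable
    (measurable_pi_lambda _ fun i => ((measurable_pi_apply i).const_mul _).const_add _)]
  rfl


end CVAEAux
end CVAEAuxSection

open CVAEAux

/-- **The CVAE posterior satisfies the continuity assumption** (first part of Lemma 2).
If the decoder `g` satisfies `‖g(z₁,x₁) − g(z₂,x₂)‖ ≤ K_θ(‖z₁−z₂‖ + ‖x₁−x₂‖)` and the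
encoder `(μ,σ)` satisfies `‖μ(x₁,y₁) − μ(x₂,y₂)‖² + ‖σ(x₁,y₁) − σ(x₂,y₂)‖² ≤
K_φ²(‖x₁−x₂‖ + ‖y₁−y₂‖)²`, then with `q(x,y) := N(μ(x,y), diag σ(x,y)²)`, for every
function `f : Z × X → ℝ` that is `K_θ`-Lipschitz with respect to the sum metric and
integrable against the relevant measures,
`|E_{z∼q(x₁,y₁)} f(z,x₁) − E_{z∼q(x₂,y₂)} f(z,x₂)| ≤
  K_φ K_θ (‖x₁−x₂‖ + ‖y₁−y₂‖) + K_θ ‖x₁−x₂‖`. -/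
theorem cvae_posterior_continuity {d m D : ℕ}
    (g : EuclideanSpace ℝ (Fin d) → EuclideanSpace ℝ (Fin m) → EuclideanSpace ℝ (Fin D))
    (Kθ : ℝ) (hKθ : 0 < Kθ)
    (hg : ∀ (z₁ z₂ : EuclideanSpace ℝ (Fin d)) (x₁ x₂ : EuclideanSpace ℝ (Fin m)),
      ‖g z₁ x₁ - g z₂ x₂‖ ≤ Kθ * (‖z₁ - z₂‖ + ‖x₁ - x₂‖))
    (Kφ : ℝ) (hKφ : 0 < Kφ)
    (μe σe : EuclideanSpace ℝ (Fin m) → EuclideanSpace ℝ (Fin D) → EuclideanSpace ℝ (Fin d))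
    (hσ : ∀ x y i, 0 ≤ σe x y i)
    (henc : ∀ (x₁ x₂ : EuclideanSpace ℝ (Fin m)) (y₁ y₂ : EuclideanSpace ℝ (Fin D)),
      ‖μe x₁ y₁ - μe x₂ y₂‖ ^ 2 + ‖σe x₁ y₁ - σe x₂ y₂‖ ^ 2 ≤
        Kφ ^ 2 * (‖x₁ - x₂‖ + ‖y₁ - y₂‖) ^ 2)
    (x₁ x₂ : EuclideanSpace ℝ (Fin m)) (y₁ y₂ : EuclideanSpace ℝ (Fin D))
    (f : EuclideanSpace ℝ (Fin d) → EuclideanSpace ℝ (Fin m) → ℝ)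
    (hf : ∀ (z z' : EuclideanSpace ℝ (Fin d)) (x x' : EuclideanSpace ℝ (Fin m)),
      |f z x - f z' x'| ≤ Kθ * (‖z - z'‖ + ‖x - x'‖))
    (hfint₁ : Integrable (fun z => f z x₁) (gaussianPi (μe x₁ y₁) (σe x₁ y₁)))
    (hfint₂ : Integrable (fun z => f z x₂) (gaussianPi (μe x₂ y₂) (σe x₂ y₂))) :
    |(∫ z, f z x₁ ∂gaussianPi (μe x₁ y₁) (σe x₁ y₁)) -
        ∫ z, f z x₂ ∂gaussianPi (μe x₂ y₂) (σe x₂ y₂)| ≤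
      Kφ * Kθ * (‖x₁ - x₂‖ + ‖y₁ - y₂‖) + Kθ * ‖x₁ - x₂‖ := by
  classical
  set γ : Measure (Fin d → ℝ) :=
    Measure.pi (fun _ : Fin d => gaussianReal 0 1) with hγ
  haveI : IsProbabilityMeasure γ := by
    rw [hγ]
    exact inferInstanceAs (IsProbabilityMeasure
      (Measure.pi (fun _ : Fin d => gaussianReal 0 1) : Measure (∀ _ : Fin d, ℝ)))
  set μ₁ := μe x₁ y₁ with hμ₁
  set μ₂ := μe x₂ y₂ with hμ₂
  set σ₁ := σe x₁ y₁ with hσ₁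
  set σ₂ := σe x₂ y₂ with hσ₂
  set T₁ : (Fin d → ℝ) → EuclideanSpace ℝ (Fin d) :=
    fun a => WithLp.toLp 2 (fun i => μ₁ i + σ₁ i * a i) with hT₁
  set T₂ : (Fin d → ℝ) → EuclideanSpace ℝ (Fin d) :=
    fun a => WithLp.toLp 2 (fun i => μ₂ i + σ₂ i * a i) with hT₂
  have hT₁m : Measurable T₁ :=
    (MeasurableEquiv.toLp 2 (Fin d → ℝ)).measurable.comp <| measurable_pi_lambda _ fun i => ((measurable_pi_apply i).const_mul _).const_add _
  have hT₂m : Measurable T₂ :=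
    (MeasurableEquiv.toLp 2 (Fin d → ℝ)).measurable.comp <| measurable_pi_lambda _ fun i => ((measurable_pi_apply i).const_mul _).const_add _
  have hmap₁ : gaussianPi μ₁ σ₁ = γ.map T₁ := gaussianPi_eq_map μ₁ σ₁
  have hmap₂ : gaussianPi μ₂ σ₂ = γ.map T₂ := gaussianPi_eq_map μ₂ σ₂
  -- transfer integrals and integrability to γ
  have hi₁ : Integrable (fun a => f (T₁ a) x₁) γ := by
    rw [hmap₁] at hfint₁
    exact (integrable_map_measure hfint₁.1 hT₁m.aemeasurable).mp hfint₁
  have hi₂ : Integrable (fun a => f (T₂ a) x₂) γ := by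
    rw [hmap₂] at hfint₂
    exact (integrable_map_measure hfint₂.1 hT₂m.aemeasurable).mp hfint₂
  have hint₁ : ∫ z, f z x₁ ∂gaussianPi μ₁ σ₁ = ∫ a, f (T₁ a) x₁ ∂γ := by
    rw [hmap₁] at hfint₁ ⊢
    exact integral_map hT₁m.aemeasurable hfint₁.1
  have hint₂ : ∫ z, f z x₂ ∂gaussianPi μ₂ σ₂ = ∫ a, f (T₂ a) x₂ ∂γ := by
    rw [hmap₂] at hfint₂ ⊢
    exact integral_map hT₂m.aemeasurable hfint₂.1
  -- the coupling difference
  set v : (Fin d → ℝ) → EuclideanSpace ℝ (Fin d) :=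
    fun a => T₁ a - T₂ a with hv
  have hvi : ∀ (a : Fin d → ℝ) i,
      v a i = (μ₁ i - μ₂ i) + (σ₁ i - σ₂ i) * a i := by
    intro a i
    show T₁ a i - T₂ a i = _
    simp only [hT₁, hT₂, WithLp.ofLp_toLp]
    ring
  have hvm : Measurable v := hT₁m.sub hT₂m
  -- squared norm as a sum
  have hXsq_eq : (fun a => ‖v a‖^2)
      = fun a => ∑ i, ((μ₁ i - μ₂ i) + (σ₁ i - σ₂ i) * a i)^2 := by
    funext a
    rw [EuclideanSpace.norm_eq, Real.sq_sqrt (by positivity)]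
    refine Finset.sum_congr rfl fun i _ => ?_
    rw [Real.norm_eq_abs, sq_abs, hvi]
  -- integrability and value of each coordinate integral
  have hcoord_int : ∀ i : Fin d,
      Integrable (fun a : Fin d → ℝ =>
        ((μ₁ i - μ₂ i) + (σ₁ i - σ₂ i) * a i)^2) γ := by
    intro i
    have h0 := integrable_affine_sq_N01 (μ₁ i - μ₂ i) (σ₁ i - σ₂ i)
    rw [← pi_map_eval (fun _ : Fin d => gaussianReal 0 1) i] at h0
    have := (integrable_map_measure h0.1 (measurable_pi_apply i).aemeasurable).mp h0
    exact this
  have hcoord_val : ∀ i : Fin d,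
      ∫ a, ((μ₁ i - μ₂ i) + (σ₁ i - σ₂ i) * a i)^2 ∂γ
        = (μ₁ i - μ₂ i)^2 + (σ₁ i - σ₂ i)^2 := by
    intro i
    have h0 := integrable_affine_sq_N01 (μ₁ i - μ₂ i) (σ₁ i - σ₂ i)
    rw [← pi_map_eval (fun _ : Fin d => gaussianReal 0 1) i] at h0
    have hmapped := integral_map (μ := γ) (measurable_pi_apply i).aemeasurable h0.1
    rw [← hmapped]
    have h1 := int_affine_sq_N01 (μ₁ i - μ₂ i) (σ₁ i - σ₂ i)
    rw [← pi_map_eval (fun _ : Fin d => gaussianReal 0 1) i] at h1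
    exact h1
  have hIntX2 : Integrable (fun a => ‖v a‖^2) γ := by
    rw [hXsq_eq]
    exact integrable_finset_sum _ fun i _ => hcoord_int i
  have hEX2 : ∫ a, ‖v a‖^2 ∂γ = ‖μ₁ - μ₂‖^2 + ‖σ₁ - σ₂‖^2 := by
    rw [hXsq_eq, integral_finset_sum _ fun i _ => hcoord_int i]
    have hnμ : ‖μ₁ - μ₂‖^2 = ∑ i, (μ₁ i - μ₂ i)^2 := by
      rw [EuclideanSpace.norm_eq, Real.sq_sqrt (by positivity)]
      refine Finset.sum_congr rfl fun i _ => ?_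
      rw [Real.norm_eq_abs, sq_abs]
      simp
    have hnσ : ‖σ₁ - σ₂‖^2 = ∑ i, (σ₁ i - σ₂ i)^2 := by
      rw [EuclideanSpace.norm_eq, Real.sq_sqrt (by positivity)]
      refine Finset.sum_congr rfl fun i _ => ?_
      rw [Real.norm_eq_abs, sq_abs]
      simp
    rw [hnμ, hnσ, ← Finset.sum_add_distrib]
    exact Finset.sum_congr rfl fun i _ => hcoord_val i
  -- Cauchy–Schwarz via variance
  have hXaesm : AEStronglyMeasurable (fun a => ‖v a‖) γ := hvm.norm.aestronglyMeasurable
  have hmem : MemLp (fun a => ‖v a‖) 2 γ :=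
    (memLp_two_iff_integrable_sq hXaesm).mpr hIntX2
  have hIntX : Integrable (fun a => ‖v a‖) γ := hmem.integrable one_le_two
  have hEXnonneg : 0 ≤ ∫ a, ‖v a‖ ∂γ := integral_nonneg fun a => norm_nonneg _
  have hCS : (∫ a, ‖v a‖ ∂γ)^2 ≤ ∫ a, ‖v a‖^2 ∂γ := by
    have hvar := variance_nonneg (fun a => ‖v a‖) γ
    rw [variance_eq_sub hmem] at hvar
    have heq : γ[(fun a => ‖v a‖) ^ 2] = ∫ a, ‖v a‖^2 ∂γ := rfl
    rw [heq] at hvar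
    linarith
  set S : ℝ := ‖μ₁ - μ₂‖^2 + ‖σ₁ - σ₂‖^2 with hS
  have hSnonneg : 0 ≤ S := by positivity
  have hs0 : 0 ≤ ‖x₁ - x₂‖ + ‖y₁ - y₂‖ := by positivity
  have hEX_le : ∫ a, ‖v a‖ ∂γ ≤ Kφ * (‖x₁ - x₂‖ + ‖y₁ - y₂‖) := by
    have h1 : (∫ a, ‖v a‖ ∂γ)^2 ≤ S := by rw [hEX2] at hCS; exact hCS
    have h2 : S ≤ (Kφ * (‖x₁ - x₂‖ + ‖y₁ - y₂‖))^2 := by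
      have := henc x₁ x₂ y₁ y₂
      rw [hS]
      calc ‖μ₁ - μ₂‖^2 + ‖σ₁ - σ₂‖^2 ≤ Kφ^2 * (‖x₁ - x₂‖ + ‖y₁ - y₂‖)^2 := this
        _ = (Kφ * (‖x₁ - x₂‖ + ‖y₁ - y₂‖))^2 := by ring
    nlinarith [mul_nonneg hKφ.le hs0]
  -- pointwise bound and conclusion
  have hbound : ∀ a, |f (T₁ a) x₁ - f (T₂ a) x₂| ≤ Kθ * (‖v a‖ + ‖x₁ - x₂‖) :=
    fun a => hf (T₁ a) (T₂ a) x₁ x₂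
  have hIntRHS : Integrable (fun a => Kθ * (‖v a‖ + ‖x₁ - x₂‖)) γ :=
    (hIntX.add (integrable_const _)).const_mul _
  have hmain : |(∫ a, f (T₁ a) x₁ ∂γ) - ∫ a, f (T₂ a) x₂ ∂γ|
      ≤ Kθ * ((∫ a, ‖v a‖ ∂γ) + ‖x₁ - x₂‖) := by
    rw [← integral_sub hi₁ hi₂]
    calc |∫ a, (f (T₁ a) x₁ - f (T₂ a) x₂) ∂γ|
        ≤ ∫ a, |f (T₁ a) x₁ - f (T₂ a) x₂| ∂γ := by
          simpa [Real.norm_eq_abs] using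
            norm_integral_le_integral_norm (μ := γ) (fun a => f (T₁ a) x₁ - f (T₂ a) x₂)
      _ ≤ ∫ a, Kθ * (‖v a‖ + ‖x₁ - x₂‖) ∂γ :=
          integral_mono (hi₁.sub hi₂).abs hIntRHS hbound
      _ = Kθ * ((∫ a, ‖v a‖ ∂γ) + ‖x₁ - x₂‖) := by
          rw [integral_const_mul, integral_add hIntX (integrable_const _), integral_const]
          simp
  rw [hint₁, hint₂]
  calc |(∫ a, f (T₁ a) x₁ ∂γ) - ∫ a, f (T₂ a) x₂ ∂γ|
      ≤ Kθ * ((∫ a, ‖v a‖ ∂γ) + ‖x₁ - x₂‖) := hmain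
    _ ≤ Kθ * (Kφ * (‖x₁ - x₂‖ + ‖y₁ - y₂‖) + ‖x₁ - x₂‖) := by
        apply mul_le_mul_of_nonneg_left _ hKθ.le
        exact add_le_add_left hEX_le _
    _ = Kφ * Kθ * (‖x₁ - x₂‖ + ‖y₁ - y₂‖) + Kθ * ‖x₁ - x₂‖ := by ring
end

section
/- Let g : Z → Y be Lipschitz with constant K_θ > 0, and let μ : Y → ℝ^d and σ : Y → ℝ^d (σ componentwise nonnegative) satisfy ‖μ(y₁) − μ(y₂)‖² + ‖σ(y₁) − σ(y₂)‖² ≤ K_φ²‖y₁−y₂‖² for some K_φ > 0, and write q(y) := N(μ(y), diag σ(y)²). Then: (i) for every fixed y ∈ Y, the function z ↦ ‖y − g(z)‖ is K_θ-Lipschitz on Z; and (ii) for all y₁, y₂ ∈ Y and every integrable K_θ-Lipschitz function f : Z → ℝ, | E_{z∼q(y₁)} f(z) − E_{z∼q(y₂)} f(z) | ≤ K_φ K_θ ‖y₁ − y₂‖. -/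
open MeasureTheory ProbabilityTheory
open Real

namespace VAEContinuityAux

/-! ### One-dimensional standard Gaussian facts -/

noncomputable def G : Measure ℝ := gaussianReal 0 1

instance : IsProbabilityMeasure G := by rw [G]; infer_instance

lemma G_eq : G = volume.withDensity (fun x => ((gaussianPDFReal 0 1 x).toNNReal : ENNReal)) := by
  rw [G, gaussianReal_of_var_ne_zero _ one_ne_zero]; rfl

lemma integral_G (g : ℝ → ℝ) :
    ∫ x, g x ∂G = ∫ x, gaussianPDFReal 0 1 x * g x := by
  rw [G_eq, integral_withDensity_eq_integral_smul (measurable_gaussianPDFReal 0 1).real_toNNReal g]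
  refine integral_congr_ae (Filter.Eventually.of_forall fun x => ?_)
  simp [NNReal.smul_def, Real.coe_toNNReal _ (gaussianPDFReal_nonneg 0 1 x)]

lemma integrable_G_iff {g : ℝ → ℝ} :
    Integrable g G ↔ Integrable (fun x => g x * gaussianPDFReal 0 1 x) volume := by
  rw [G_eq, integrable_withDensity_iff
    ((measurable_gaussianPDFReal 0 1).real_toNNReal.coe_nnreal_ennreal)
    (Filter.Eventually.of_forall fun x => ENNReal.coe_lt_top)]
  refine integrable_congr (Filter.Eventually.of_forall fun x => ?_)
  simp [Real.coe_toNNReal _ (gaussianPDFReal_nonneg 0 1 x)]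

lemma pdf01 (x : ℝ) : gaussianPDFReal 0 1 x = (√(2*π))⁻¹ * rexp (-(2⁻¹) * x^2) := by
  simp only [gaussianPDFReal, NNReal.coe_one, mul_one, sub_zero]
  ring_nf

lemma integrable_id_G : Integrable (fun x : ℝ => x) G := by
  rw [integrable_G_iff]
  have h : Integrable (fun x : ℝ => (√(2*π))⁻¹ * (x * rexp (-(2⁻¹) * x^2))) volume :=
    (integrable_mul_exp_neg_mul_sq (by norm_num : (0:ℝ) < 2⁻¹)).const_mul _
  refine h.congr (Filter.Eventually.of_forall fun x => ?_)
  simp only [pdf01]; ring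

lemma sq_exp_bound (x : ℝ) : x^2 * rexp (-(2⁻¹) * x^2) ≤ 4 * rexp (-(4⁻¹) * x^2) := by
  have h1 : x^2 ≤ 4 * rexp (4⁻¹ * x^2) := by
    have := Real.add_one_le_exp ((4:ℝ)⁻¹ * x^2)
    nlinarith [Real.exp_pos ((4:ℝ)⁻¹ * x^2), sq_nonneg x]
  have h2 : rexp (4⁻¹ * x^2) * rexp (-(2⁻¹) * x^2) = rexp (-(4⁻¹) * x^2) := by
    rw [← Real.exp_add]; ring_nf
  calc x^2 * rexp (-(2⁻¹) * x^2) ≤ (4 * rexp (4⁻¹ * x^2)) * rexp (-(2⁻¹) * x^2) :=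
        mul_le_mul_of_nonneg_right h1 (Real.exp_pos _).le
    _ = 4 * rexp (-(4⁻¹) * x^2) := by rw [mul_assoc, h2]

lemma integrable_sq_G : Integrable (fun x : ℝ => x^2) G := by
  rw [integrable_G_iff]
  have h : Integrable (fun x : ℝ => (√(2*π))⁻¹ * (4 * rexp (-(4⁻¹) * x^2))) volume :=
    ((integrable_exp_neg_mul_sq (by norm_num : (0:ℝ) < 4⁻¹)).const_mul 4).const_mul _
  refine h.mono'
    (((measurable_id.pow_const 2).mul (measurable_gaussianPDFReal 0 1)).aestronglyMeasurable) ?_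
  refine Filter.Eventually.of_forall fun x => ?_
  simp only [pdf01]
  have hπ : 0 ≤ (√(2*π))⁻¹ := by positivity
  have h0 : |x ^ 2 * ((√(2*π))⁻¹ * rexp (-2⁻¹ * x ^ 2))|
      = (√(2*π))⁻¹ * (x^2 * rexp (-(2⁻¹) * x^2)) := by
    rw [abs_of_nonneg (by positivity)]; ring
  rw [Real.norm_eq_abs, h0]
  have := sq_exp_bound x
  nlinarith

lemma G_map_neg : G.map (fun x : ℝ => -x) = G := by
  have h : (fun x : ℝ => -x) = (fun x : ℝ => (-1 : ℝ) * x) := by funext x; ring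
  rw [G, h, gaussianReal_map_const_mul (-1)]
  norm_num

lemma integral_id_G : ∫ x, x ∂G = 0 := by
  have h : ∫ x, x ∂G = ∫ x, -x ∂G := by
    conv_lhs => rw [← G_map_neg]
    exact integral_map (by fun_prop) measurable_id.aestronglyMeasurable
  rw [integral_neg] at h
  linarith

lemma J_val : ∫ x : ℝ, x^2 * rexp (-(2⁻¹) * x^2) = √2 * √π := by
  have habs : (fun x : ℝ => x^2 * rexp (-(2⁻¹) * x^2))
      = fun x : ℝ => |x|^2 * rexp (-(2⁻¹) * |x|^2) := by
    funext x; rw [sq_abs]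
  rw [habs, integral_comp_abs (f := fun t : ℝ => t^2 * rexp (-(2⁻¹) * t^2))]
  have hIoi : ∫ x in Set.Ioi (0:ℝ), x^2 * rexp (-(2⁻¹) * x^2)
      = ∫ x in Set.Ioi (0:ℝ), x ^ (2:ℝ) * rexp (-(2⁻¹) * x ^ (2:ℝ)) := by
    refine setIntegral_congr_fun measurableSet_Ioi fun x hx => ?_
    rw [show ((2:ℝ)) = ((2:ℕ):ℝ) by norm_num, Real.rpow_natCast]
  rw [hIoi, integral_rpow_mul_exp_neg_mul_rpow (by norm_num) (by norm_num)
    (by norm_num : (0:ℝ) < 2⁻¹)]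
  have hG : Real.Gamma (((2:ℝ) + 1) / 2) = √π / 2 := by
    rw [show ((2:ℝ)+1)/2 = 1/2 + 1 by norm_num, Real.Gamma_add_one (by norm_num),
      Real.Gamma_one_half_eq]
    ring
  have hrpow : ((2:ℝ)⁻¹) ^ (-((2:ℝ) + 1) / 2) = 2 * √2 := by
    rw [show (-((2:ℝ)+1)/2) = -(3/2) by norm_num, Real.rpow_neg (by norm_num),
      Real.inv_rpow (by norm_num), inv_inv,
      show ((3:ℝ)/2) = 1 + 1/2 by norm_num, Real.rpow_add (by norm_num), Real.rpow_one,
      ← Real.sqrt_eq_rpow]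
  rw [hG, hrpow]
  ring

lemma integral_sq_G : ∫ x, x^2 ∂G = 1 := by
  rw [integral_G (fun x => x^2)]
  have h : (fun x : ℝ => gaussianPDFReal 0 1 x * x^2)
      = fun x : ℝ => (√(2*π))⁻¹ * (x^2 * rexp (-(2⁻¹) * x^2)) := by
    funext x; rw [pdf01]; ring
  rw [h, integral_const_mul, J_val, Real.sqrt_mul (by norm_num) π]
  have h2 : (0:ℝ) < √2 * √π := by positivity
  field_simp

lemma integrable_affine_sq_G (a b : ℝ) : Integrable (fun x : ℝ => (a + b*x)^2) G := by
  have h : Integrable (fun x : ℝ => a^2 + (2*a*b) * x + b^2 * x^2) G :=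
    (((integrable_const _).add (integrable_id_G.const_mul _)).add (integrable_sq_G.const_mul _))
  refine h.congr (Filter.Eventually.of_forall fun x => ?_)
  ring

lemma integral_affine_sq_G (a b : ℝ) : ∫ x, (a + b*x)^2 ∂G = a^2 + b^2 := by
  have h : (fun x : ℝ => (a + b*x)^2) = fun x : ℝ => (a^2 + (2*a*b) * x) + b^2 * x^2 := by
    funext x; ring
  have h1 : Integrable (fun x : ℝ => (2*a*b) * x) G := integrable_id_G.const_mul _
  have h2 : Integrable (fun x : ℝ => b^2 * x^2) G := integrable_sq_G.const_mul _
  have h3 : Integrable (fun x : ℝ => a^2 + (2*a*b) * x) G := (integrable_const _).add h1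
  rw [h, integral_add h3 h2, integral_add (integrable_const _) h1,
    integral_const_mul, integral_const_mul, integral_id_G, integral_sq_G, integral_const]
  simp

/-! ### Product of standard Gaussians -/

noncomputable def stdPi (d : ℕ) : Measure (EuclideanSpace ℝ (Fin d)) :=
  (Measure.pi fun _ : Fin d => G).map (MeasurableEquiv.toLp 2 (Fin d → ℝ))

instance (d : ℕ) : IsProbabilityMeasure (stdPi d) := by
  have h : IsProbabilityMeasure (Measure.pi (fun _ : Fin d => G) : Measure (∀ _ : Fin d, ℝ)) :=
    inferInstance
  exact Measure.isProbabilityMeasure_map (MeasurableEquiv.toLp 2 (Fin d → ℝ)).measurable.aemeasurable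

lemma meas_eval {d : ℕ} (i : Fin d) : Measurable (fun ε : EuclideanSpace ℝ (Fin d) => ε i) :=
  (measurable_pi_apply i).comp (MeasurableEquiv.toLp 2 (Fin d → ℝ)).symm.measurable

lemma G_map_affine (m s : ℝ) :
    G.map (fun x => m + s * x) = gaussianReal m ⟨s^2, sq_nonneg _⟩ := by
  have h1 : (fun x : ℝ => m + s * x) = (fun y => y + m) ∘ (fun x : ℝ => s * x) := by
    funext x; simp [add_comm]
  rw [h1, ← Measure.map_map (measurable_add_const m) (measurable_const_mul s), G,
    gaussianReal_map_const_mul, gaussianReal_map_add_const]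
  norm_num
  rfl

lemma mp_affine {d : ℕ} (μ σ : EuclideanSpace ℝ (Fin d)) :
    MeasurePreserving
      (fun ε : EuclideanSpace ℝ (Fin d) =>
        (WithLp.toLp 2 (fun i => μ i + σ i * ε i) : EuclideanSpace ℝ (Fin d)))
      (stdPi d) (gaussianPi μ σ) := by
  have h1 : MeasurePreserving (MeasurableEquiv.toLp 2 (Fin d → ℝ)).symm (stdPi d)
      (Measure.pi fun _ : Fin d => G) :=
    MeasurePreserving.symm _
      ((MeasurableEquiv.toLp 2 (Fin d → ℝ)).measurable.measurePreserving _)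
  have h2 : MeasurePreserving (fun ε : Fin d → ℝ => fun i => μ i + σ i * ε i)
      (Measure.pi fun _ : Fin d => G)
      (Measure.pi fun i => gaussianReal (μ i) ⟨(σ i) ^ 2, sq_nonneg _⟩) :=
    have hν : ∀ i, SigmaFinite (gaussianReal (μ i) ⟨(σ i) ^ 2, sq_nonneg _⟩) :=
      fun i => by
        haveI := instIsProbabilityMeasureGaussianReal (μ i) ⟨(σ i) ^ 2, sq_nonneg _⟩
        infer_instance
    measurePreserving_pi _ _ (hν := hν) (fun i => ⟨by fun_prop, G_map_affine (μ i) (σ i)⟩)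
  have h3 : MeasurePreserving (MeasurableEquiv.toLp 2 (Fin d → ℝ))
      (Measure.pi fun i => gaussianReal (μ i) ⟨(σ i) ^ 2, sq_nonneg _⟩) (gaussianPi μ σ) :=
    ⟨(MeasurableEquiv.toLp 2 (Fin d → ℝ)).measurable, rfl⟩
  exact h3.comp (h2.comp h1)

lemma stdPi_map_eval' (d : ℕ) (i : Fin d) :
    (Measure.pi fun _ : Fin d => G).map (fun ε : Fin d → ℝ => ε i) = G := by
  ext s hs
  rw [Measure.map_apply (measurable_pi_apply i) hs]
  classical
  have h : (fun ε : Fin d → ℝ => ε i) ⁻¹' s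
      = Set.pi Set.univ (Function.update (fun _ : Fin d => Set.univ) i s) := by
    rw [← Set.eval_preimage]
  rw [h, Measure.pi_pi]
  rw [Fintype.prod_eq_single i (fun j hj => by simp [Function.update_of_ne hj])]
  simp

lemma stdPi_map_eval {d : ℕ} (i : Fin d) :
    (stdPi d).map (fun ε : EuclideanSpace ℝ (Fin d) => ε i) = G := by
  rw [stdPi, Measure.map_map (meas_eval i) (MeasurableEquiv.toLp 2 (Fin d → ℝ)).measurable]
  exact stdPi_map_eval' d i

lemma integral_eval {d : ℕ} (i : Fin d) {φ : ℝ → ℝ} (hφ : Measurable φ) :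
    ∫ ε, φ (ε i) ∂(stdPi d) = ∫ t, φ t ∂G := by
  have hev : AEMeasurable (fun ε : EuclideanSpace ℝ (Fin d) => ε i) (stdPi d) := by
    exact (meas_eval i).aemeasurable
  rw [← stdPi_map_eval i]
  exact (integral_map hev hφ.aestronglyMeasurable).symm

lemma integrable_eval {d : ℕ} (i : Fin d) {φ : ℝ → ℝ} (hφ : Measurable φ)
    (h : Integrable φ G) :
    Integrable (fun ε : EuclideanSpace ℝ (Fin d) => φ (ε i)) (stdPi d) := by
  rw [← stdPi_map_eval i] at h
  have hev : AEMeasurable (fun ε : EuclideanSpace ℝ (Fin d) => ε i) (stdPi d) := by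
    exact (meas_eval i).aemeasurable
  exact (integrable_map_measure hφ.aestronglyMeasurable hev).mp h

/-- Cauchy–Schwarz: on a probability space, `(∫ g)² ≤ ∫ g²`. -/
lemma sq_integral_le {α : Type*} [MeasurableSpace α] {μ : Measure α} [IsProbabilityMeasure μ]
    {g : α → ℝ} (hg : Integrable g μ) (hg2 : Integrable (fun x => g x ^ 2) μ) :
    (∫ x, g x ∂μ) ^ 2 ≤ ∫ x, g x ^ 2 ∂μ := by
  set c := ∫ x, g x ∂μ with hc
  have h0 : 0 ≤ ∫ x, (g x - c)^2 ∂μ := integral_nonneg fun x => sq_nonneg _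
  have hexp : ∫ x, (g x - c)^2 ∂μ = (∫ x, g x ^ 2 ∂μ) - c^2 := by
    have h : (fun x => (g x - c)^2) = fun x => (g x ^ 2 - (2*c) * g x) + c^2 := by
      funext x; ring
    have hsub : Integrable (fun x => g x ^ 2 - (2*c) * g x) μ := hg2.sub (hg.const_mul _)
    have hcm : Integrable (fun x => (2*c) * g x) μ := hg.const_mul _
    rw [h, integral_add hsub (integrable_const _),
      integral_sub hg2 hcm, integral_const_mul, integral_const]
    simp [measure_univ, ← hc]
    ring
  linarith [hexp ▸ h0]

end VAEContinuityAux

open VAEContinuityAux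

/-- **The VAE satisfies the continuity assumption of the PAC-Bayes framework** (Lemma 1).
Given a `K_θ`-Lipschitz decoder `g : Z → Y` and an encoder `(μ,σ) : Y → ℝ^d × ℝ^d_{≥0}`
with `‖μ(y₁) − μ(y₂)‖² + ‖σ(y₁) − σ(y₂)‖² ≤ K_φ² ‖y₁−y₂‖²`, writing
`q(y) := N(μ(y), diag σ(y)²)`:
(i) for every fixed `y`, the map `z ↦ ‖y − g(z)‖` is `K_θ`-Lipschitz; and
(ii) for all `y₁, y₂` and every integrable `K_θ`-Lipschitz `f : Z → ℝ`,
`|E_{z∼q(y₁)} f(z) − E_{z∼q(y₂)} f(z)| ≤ K_φ K_θ ‖y₁ − y₂‖`. -/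
theorem vae_satisfies_continuity_assumption {d D : ℕ}
    (g : EuclideanSpace ℝ (Fin d) → EuclideanSpace ℝ (Fin D))
    (Kθ : ℝ) (hKθ : 0 < Kθ)
    (hg : ∀ z₁ z₂ : EuclideanSpace ℝ (Fin d), ‖g z₁ - g z₂‖ ≤ Kθ * ‖z₁ - z₂‖)
    (Kφ : ℝ) (hKφ : 0 < Kφ)
    (μe σe : EuclideanSpace ℝ (Fin D) → EuclideanSpace ℝ (Fin d))
    (hσ : ∀ y i, 0 ≤ σe y i)
    (henc : ∀ y₁ y₂ : EuclideanSpace ℝ (Fin D),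
      ‖μe y₁ - μe y₂‖ ^ 2 + ‖σe y₁ - σe y₂‖ ^ 2 ≤ Kφ ^ 2 * ‖y₁ - y₂‖ ^ 2) :
    (∀ (y : EuclideanSpace ℝ (Fin D)) (z₁ z₂ : EuclideanSpace ℝ (Fin d)),
      |‖y - g z₁‖ - ‖y - g z₂‖| ≤ Kθ * ‖z₁ - z₂‖) ∧
    (∀ (y₁ y₂ : EuclideanSpace ℝ (Fin D)) (f : EuclideanSpace ℝ (Fin d) → ℝ),
      (∀ z z', |f z - f z'| ≤ Kθ * ‖z - z'‖) →
      Integrable f (gaussianPi (μe y₁) (σe y₁)) →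
      Integrable f (gaussianPi (μe y₂) (σe y₂)) →
      |(∫ z, f z ∂gaussianPi (μe y₁) (σe y₁)) - ∫ z, f z ∂gaussianPi (μe y₂) (σe y₂)| ≤
        Kφ * Kθ * ‖y₁ - y₂‖) := by
  constructor
  · intro y z₁ z₂
    calc |‖y - g z₁‖ - ‖y - g z₂‖| ≤ ‖(y - g z₁) - (y - g z₂)‖ := abs_norm_sub_norm_le _ _
      _ = ‖g z₂ - g z₁‖ := by congr 1; abel
      _ ≤ Kθ * ‖z₂ - z₁‖ := hg _ _
      _ = Kθ * ‖z₁ - z₂‖ := by rw [norm_sub_rev]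
  · intro y₁ y₂ f hf hf1 hf2
    set μ₁ := μe y₁ with hμ₁
    set σ₁ := σe y₁ with hσ₁
    set μ₂ := μe y₂ with hμ₂
    set σ₂ := σe y₂ with hσ₂
    set T₁ : EuclideanSpace ℝ (Fin d) → EuclideanSpace ℝ (Fin d) :=
      fun ε => WithLp.toLp 2 (fun i => μ₁ i + σ₁ i * ε i) with hT₁def
    set T₂ : EuclideanSpace ℝ (Fin d) → EuclideanSpace ℝ (Fin d) :=
      fun ε => WithLp.toLp 2 (fun i => μ₂ i + σ₂ i * ε i) with hT₂def
    have hT₁ : MeasurePreserving T₁ (stdPi d) (gaussianPi μ₁ σ₁) := mp_affine μ₁ σ₁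
    have hT₂ : MeasurePreserving T₂ (stdPi d) (gaussianPi μ₂ σ₂) := mp_affine μ₂ σ₂
    -- rewrite the two integrals as integrals over the standard Gaussian
    have hma₁ : AEStronglyMeasurable f ((stdPi d).map T₁) := by rw [hT₁.map_eq]; exact hf1.1
    have hma₂ : AEStronglyMeasurable f ((stdPi d).map T₂) := by rw [hT₂.map_eq]; exact hf2.1
    have e₁ : ∫ z, f z ∂gaussianPi μ₁ σ₁ = ∫ ε, f (T₁ ε) ∂(stdPi d) := by
      rw [← hT₁.map_eq]; exact integral_map hT₁.measurable.aemeasurable hma₁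
    have e₂ : ∫ z, f z ∂gaussianPi μ₂ σ₂ = ∫ ε, f (T₂ ε) ∂(stdPi d) := by
      rw [← hT₂.map_eq]; exact integral_map hT₂.measurable.aemeasurable hma₂
    have hi₁ : Integrable (fun ε => f (T₁ ε)) (stdPi d) := by
      have h := hf1; rw [← hT₁.map_eq] at h
      exact (integrable_map_measure hma₁ hT₁.measurable.aemeasurable).mp h
    have hi₂ : Integrable (fun ε => f (T₂ ε)) (stdPi d) := by
      have h := hf2; rw [← hT₂.map_eq] at h
      exact (integrable_map_measure hma₂ hT₂.measurable.aemeasurable).mp h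
    -- the coupling difference
    set W : EuclideanSpace ℝ (Fin d) → EuclideanSpace ℝ (Fin d) :=
      fun ε => WithLp.toLp 2 (fun i => (μ₁ i - μ₂ i) + (σ₁ i - σ₂ i) * ε i) with hWdef
    have hWmeas : Measurable W := by
      refine (MeasurableEquiv.toLp 2 (Fin d → ℝ)).measurable.comp (measurable_pi_iff.mpr fun i => ?_)
      exact measurable_const.add ((meas_eval i).const_mul _)
    have hTW : ∀ ε, T₁ ε - T₂ ε = W ε := by
      intro ε; ext i
      show T₁ ε i - T₂ ε i = W ε i
      simp only [hT₁def, hT₂def, hWdef, PiLp.toLp_apply]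
      ring
    -- pointwise Lipschitz bound
    have hpt : ∀ ε, |f (T₁ ε) - f (T₂ ε)| ≤ Kθ * ‖W ε‖ := by
      intro ε
      have := hf (T₁ ε) (T₂ ε)
      rwa [hTW ε] at this
    -- the square of ‖W ε‖ is a sum of coordinatewise squares
    have hsq : ∀ ε, ‖W ε‖^2 = ∑ i : Fin d, ((μ₁ i - μ₂ i) + (σ₁ i - σ₂ i) * ε i)^2 := by
      intro ε
      rw [EuclideanSpace.norm_eq, Real.sq_sqrt (by positivity)]
      refine Finset.sum_congr rfl fun i _ => ?_
      rw [Real.norm_eq_abs, sq_abs]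
    have hInt2 : Integrable (fun ε => ‖W ε‖^2) (stdPi d) := by
      have h : Integrable
          (fun ε : EuclideanSpace ℝ (Fin d) =>
            ∑ i : Fin d, ((μ₁ i - μ₂ i) + (σ₁ i - σ₂ i) * ε i)^2) (stdPi d) :=
        integrable_finset_sum _ fun i _ =>
          integrable_eval i (by fun_prop) (integrable_affine_sq_G _ _)
      exact h.congr (Filter.Eventually.of_forall fun ε => (hsq ε).symm)
    have hIval : ∫ ε, ‖W ε‖^2 ∂(stdPi d) = ‖μ₁ - μ₂‖^2 + ‖σ₁ - σ₂‖^2 := by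
      have h1 : ∫ ε, ‖W ε‖^2 ∂(stdPi d)
          = ∑ i : Fin d, ((μ₁ i - μ₂ i)^2 + (σ₁ i - σ₂ i)^2) := by
        rw [integral_congr_ae (Filter.Eventually.of_forall hsq),
          integral_finset_sum _ fun i _ =>
            integrable_eval i (by fun_prop) (integrable_affine_sq_G _ _)]
        refine Finset.sum_congr rfl fun i _ => ?_
        exact (integral_eval i (φ := fun t => ((μ₁ i - μ₂ i) + (σ₁ i - σ₂ i) * t)^2)
          (by fun_prop)).trans (integral_affine_sq_G _ _)
      have h2 : ‖μ₁ - μ₂‖^2 = ∑ i : Fin d, (μ₁ i - μ₂ i)^2 := by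
        rw [EuclideanSpace.norm_eq, Real.sq_sqrt (by positivity)]
        refine Finset.sum_congr rfl fun i _ => ?_
        rw [PiLp.sub_apply, Real.norm_eq_abs, sq_abs]
      have h3 : ‖σ₁ - σ₂‖^2 = ∑ i : Fin d, (σ₁ i - σ₂ i)^2 := by
        rw [EuclideanSpace.norm_eq, Real.sq_sqrt (by positivity)]
        refine Finset.sum_congr rfl fun i _ => ?_
        rw [PiLp.sub_apply, Real.norm_eq_abs, sq_abs]
      rw [h1, h2, h3, ← Finset.sum_add_distrib]
    have hIntW : Integrable (fun ε => ‖W ε‖) (stdPi d) := by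
      have hm : AEStronglyMeasurable (fun ε => ‖W ε‖) (stdPi d) :=
        hWmeas.norm.aestronglyMeasurable
      exact ((memLp_two_iff_integrable_sq hm).mpr hInt2).integrable one_le_two
    -- Cauchy–Schwarz
    have hI0 : 0 ≤ ∫ ε, ‖W ε‖ ∂(stdPi d) := integral_nonneg fun ε => norm_nonneg _
    have hCS : ∫ ε, ‖W ε‖ ∂(stdPi d) ≤ √(‖μ₁ - μ₂‖^2 + ‖σ₁ - σ₂‖^2) := by
      rw [Real.le_sqrt hI0 (by positivity)]
      calc (∫ ε, ‖W ε‖ ∂(stdPi d))^2 ≤ ∫ ε, ‖W ε‖^2 ∂(stdPi d) :=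
            sq_integral_le hIntW hInt2
        _ = ‖μ₁ - μ₂‖^2 + ‖σ₁ - σ₂‖^2 := hIval
    have hsqrt : √(‖μ₁ - μ₂‖^2 + ‖σ₁ - σ₂‖^2) ≤ Kφ * ‖y₁ - y₂‖ := by
      calc √(‖μ₁ - μ₂‖^2 + ‖σ₁ - σ₂‖^2) ≤ √(Kφ^2 * ‖y₁ - y₂‖^2) :=
            Real.sqrt_le_sqrt (henc y₁ y₂)
        _ = Kφ * ‖y₁ - y₂‖ := by
            rw [← mul_pow, Real.sqrt_sq (by positivity)]
    -- final chain
    calc |(∫ z, f z ∂gaussianPi μ₁ σ₁) - ∫ z, f z ∂gaussianPi μ₂ σ₂|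
        = |∫ ε, (f (T₁ ε) - f (T₂ ε)) ∂(stdPi d)| := by
          rw [e₁, e₂, integral_sub hi₁ hi₂]
      _ ≤ ∫ ε, |f (T₁ ε) - f (T₂ ε)| ∂(stdPi d) := by
          simpa [Real.norm_eq_abs] using norm_integral_le_integral_norm
            (fun ε => f (T₁ ε) - f (T₂ ε)) (μ := stdPi d)
      _ ≤ ∫ ε, Kθ * ‖W ε‖ ∂(stdPi d) :=
          integral_mono (hi₁.sub hi₂).abs (hIntW.const_mul Kθ) hpt
      _ = Kθ * ∫ ε, ‖W ε‖ ∂(stdPi d) := integral_const_mul Kθ _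
      _ ≤ Kθ * (Kφ * ‖y₁ - y₂‖) :=
          mul_le_mul_of_nonneg_left (hCS.trans hsqrt) hKθ.le
      _ = Kφ * Kθ * ‖y₁ - y₂‖ := by ring
end
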